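/- arXiv:math/0602312 — 3 statements merged into one kernel-verified Lean document; each statement's English description precedes it below -/
import Mathlib

section
/- Let A have property T, and suppose every finite-dimensional irreducible representation π of A has its central cover c(π) realized as a central projection p_π ∈ A with π(p_π) = 1 and p_π A ≅ M_n(ℂ). Let J ⊴ A be the closed two-sided ideal generated by all such Kazhdan projections. Then the quotient A/J has no nonzero finite-dimensional representation. -/
open Filter MulOpposite ContinuousLinearMap

/-- Bekka's property T for a unital C*-algebra. -/
def PropertyT (A : Type*) [Ring A] [StarRing A] [Algebra ℂ A] : Prop :=
  ∀ (H : Type) [NormedAddCommGroup H] [InnerProductSpace ℂ H] [CompleteSpace H]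
    (L : A →⋆ₐ[ℂ] (H →L[ℂ] H)) (R : Aᵐᵒᵖ →⋆ₐ[ℂ] (H →L[ℂ] H)),
    (∀ (a : A) (b : Aᵐᵒᵖ), Commute (L a) (R b)) →
    (∃ ξ : ℕ → H, (∀ n, ‖ξ n‖ = 1) ∧
      ∀ a : A, Tendsto (fun n => ‖L a (ξ n) - R (op a) (ξ n)‖) atTop (nhds 0)) →
    ∃ ξ : H, ξ ≠ 0 ∧ ∀ a : A, L a ξ = R (op a) ξ

/-- `p` is a Kazhdan projection of `A`: a central projection such that `π(p) = 1` for some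
finite-dimensional irreducible representation `π : A → M_n(ℂ)`, and `π` restricts to an
isomorphism of `pA` onto `M_n(ℂ)`. -/
def IsKazhdanProjection {A : Type*} [NormedRing A] [StarRing A] [NormedAlgebra ℂ A]
    (p : A) : Prop :=
  (∀ a : A, p * a = a * p) ∧ p * p = p ∧ star p = p ∧
    ∃ (n : ℕ) (_ : 0 < n)
      (π : A →⋆ₐ[ℂ] (EuclideanSpace ℂ (Fin n) →L[ℂ] EuclideanSpace ℂ (Fin n))),
      (∀ S : Submodule ℂ (EuclideanSpace ℂ (Fin n)),
        (∀ (a : A) (x : EuclideanSpace ℂ (Fin n)), x ∈ S → π a x ∈ S) → S = ⊥ ∨ S = ⊤) ∧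
      π p = 1 ∧
      Function.Bijective (fun x : A => π (p * x))

section Compress

variable {A : Type*} [NormedRing A] [StarRing A] [NormedAlgebra ℂ A] {m k : ℕ}
    (ρ : A →⋆ₐ[ℂ] (EuclideanSpace ℂ (Fin m) →L[ℂ] EuclideanSpace ℂ (Fin m)))
    (V : EuclideanSpace ℂ (Fin k) →L[ℂ] EuclideanSpace ℂ (Fin m))

lemma cmp_one (hV : adjoint V ∘L V = 1) : adjoint V ∘L ρ 1 ∘L V = 1 := by
  rw [map_one, one_def, id_comp, hV]

lemma cmp_mul (hinv : ∀ (a : A) (x : EuclideanSpace ℂ (Fin k)),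
      V (adjoint V (ρ a (V x))) = ρ a (V x)) (a b : A) :
    adjoint V ∘L ρ (a * b) ∘L V = (adjoint V ∘L ρ a ∘L V) * (adjoint V ∘L ρ b ∘L V) := by
  ext x : 1
  simp only [map_mul, comp_apply, mul_apply_eq_comp, coe_comp', Function.comp_apply]
  rw [hinv b x]

lemma cmp_zero : adjoint V ∘L ρ 0 ∘L V = 0 := by
  rw [map_zero, zero_comp, comp_zero]

lemma cmp_add (a b : A) :
    adjoint V ∘L ρ (a + b) ∘L V = (adjoint V ∘L ρ a ∘L V) + (adjoint V ∘L ρ b ∘L V) := by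
  rw [map_add, add_comp, comp_add]

lemma cmp_commutes (hV : adjoint V ∘L V = 1) (c : ℂ) :
    adjoint V ∘L ρ (algebraMap ℂ A c) ∘L V
      = algebraMap ℂ (EuclideanSpace ℂ (Fin k) →L[ℂ] EuclideanSpace ℂ (Fin k)) c := by
  rw [AlgHomClass.commutes, Algebra.algebraMap_eq_smul_one, Algebra.algebraMap_eq_smul_one,
    smul_comp, comp_smul, one_def, id_comp, hV]

lemma cmp_star (a : A) :
    adjoint V ∘L ρ (star a) ∘L V = star (adjoint V ∘L ρ a ∘L V) := by
  rw [star_eq_adjoint, adjoint_comp, adjoint_comp, adjoint_adjoint,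
    ← star_eq_adjoint, ← map_star, comp_assoc]

noncomputable def compressRep
    (hV : adjoint V ∘L V = 1)
    (hinv : ∀ (a : A) (x : EuclideanSpace ℂ (Fin k)),
      V (adjoint V (ρ a (V x))) = ρ a (V x)) :
    A →⋆ₐ[ℂ] (EuclideanSpace ℂ (Fin k) →L[ℂ] EuclideanSpace ℂ (Fin k)) where
  toFun a := adjoint V ∘L ρ a ∘L V
  map_one' := cmp_one ρ V hV
  map_mul' := cmp_mul ρ V hinv
  map_zero' := cmp_zero ρ V
  map_add' := cmp_add ρ V
  commutes' := cmp_commutes ρ V hV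
  map_star' := cmp_star ρ V

lemma compressRep_apply (hV : adjoint V ∘L V = 1)
    (hinv : ∀ (a : A) (x : EuclideanSpace ℂ (Fin k)),
      V (adjoint V (ρ a (V x))) = ρ a (V x))
    (a : A) (x : EuclideanSpace ℂ (Fin k)) :
    compressRep ρ V hV hinv a x = adjoint V (ρ a (V x)) := rfl

end Compress

/-- Assume `A` has property T and every finite-dimensional irreducible representation of `A`
has its Kazhdan projection realized in `A`. Let `J ⊴ A` be the closed (two-sided) ideal
generated by all the Kazhdan projections. Then the quotient `A/J` has no nonzero
finite-dimensional representation; equivalently (as stated here) every finite-dimensional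
representation of `A` vanishing on `J` acts on the zero space. -/
theorem quotient_by_kazhdan_ideal_no_finite_dimensional_representation
    {A : Type*} [NormedRing A] [StarRing A] [CStarRing A] [NormedAlgebra ℂ A]
    [CompleteSpace A] [TopologicalSpace.SeparableSpace A]
    (hT : PropertyT A)
    (hkazhdan : ∀ (n : ℕ), 0 < n →
      ∀ π : A →⋆ₐ[ℂ] (EuclideanSpace ℂ (Fin n) →L[ℂ] EuclideanSpace ℂ (Fin n)),
        (∀ S : Submodule ℂ (EuclideanSpace ℂ (Fin n)),
          (∀ (a : A) (x : EuclideanSpace ℂ (Fin n)), x ∈ S → π a x ∈ S) → S = ⊥ ∨ S = ⊤) →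
        ∃ p : A, IsKazhdanProjection p ∧ π p = 1)
    (m : ℕ)
    (ρ : A →⋆ₐ[ℂ] (EuclideanSpace ℂ (Fin m) →L[ℂ] EuclideanSpace ℂ (Fin m)))
    (hvanish : ∀ x ∈ closure ((Ideal.span {p : A | IsKazhdanProjection p} : Ideal A) : Set A),
      ρ x = 0) :
    m = 0 := by
  by_contra hm0
  have hm : 0 < m := Nat.pos_of_ne_zero hm0
  classical
  haveI : Nontrivial (EuclideanSpace ℂ (Fin m)) :=
    Module.nontrivial_of_finrank_pos (R := ℂ)
      (by rw [finrank_euclideanSpace_fin]; exact hm)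
  have hex : ∃ n, ∃ S : Submodule ℂ (EuclideanSpace ℂ (Fin m)),
      (∀ (a : A) (x), x ∈ S → ρ a x ∈ S) ∧ S ≠ ⊥ ∧ Module.finrank ℂ S = n :=
    ⟨_, ⊤, fun _ _ _ => trivial, by simp, rfl⟩
  obtain ⟨S, hSinv, hSne, hSrank⟩ := Nat.find_spec hex
  set k := Nat.find hex with hkdef
  haveI : Nontrivial S := Submodule.nontrivial_iff_ne_bot.mpr hSne
  have hkpos : 0 < k := hSrank ▸ Module.finrank_pos
  let e : S ≃ₗᵢ[ℂ] EuclideanSpace ℂ (Fin k) :=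
    ((stdOrthonormalBasis ℂ S).reindex (finCongr hSrank)).repr
  let V : EuclideanSpace ℂ (Fin k) →L[ℂ] EuclideanSpace ℂ (Fin m) :=
    (S.subtypeₗᵢ.comp e.symm.toLinearIsometry).toContinuousLinearMap
  have hVx : ∀ x, V x = ((e.symm x : S) : EuclideanSpace ℂ (Fin m)) := fun _ => rfl
  have hVmem : ∀ x, V x ∈ S := fun x => (e.symm x).2
  have hV : adjoint V ∘L V = 1 :=
    (norm_map_iff_adjoint_comp_self V).1
      (fun x => (S.subtypeₗᵢ.comp e.symm.toLinearIsometry).norm_map x)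
  have hVVx : ∀ x, adjoint V (V x) = x := fun x => by
    have := congrFun (congrArg (DFunLike.coe) hV) x
    simpa using this
  have hVinj : Function.Injective V := fun x y hxy => by
    rw [← hVVx x, ← hVVx y, hxy]
  have hsurj : ∀ y ∈ S, ∃ x, V x = y := by
    intro y hy
    refine ⟨e ⟨y, hy⟩, ?_⟩
    rw [hVx, e.symm_apply_apply]
  have hproj : ∀ y ∈ S, V (adjoint V y) = y := by
    intro y hy
    obtain ⟨x, rfl⟩ := hsurj y hy
    rw [hVVx]
  have hinv : ∀ (a : A) x, V (adjoint V (ρ a (V x))) = ρ a (V x) :=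
    fun a x => hproj _ (hSinv a _ (hVmem x))
  let π := compressRep ρ V hV hinv
  have hirr : ∀ T : Submodule ℂ (EuclideanSpace ℂ (Fin k)),
      (∀ (a : A) (x), x ∈ T → π a x ∈ T) → T = ⊥ ∨ T = ⊤ := by
    intro T hT
    by_cases hTbot : T = ⊥
    · exact Or.inl hTbot
    right
    set T' : Submodule ℂ (EuclideanSpace ℂ (Fin m)) :=
      T.map (V : EuclideanSpace ℂ (Fin k) →ₗ[ℂ] EuclideanSpace ℂ (Fin m)) with hT'def
    have hT'le : T' ≤ S := by
      rintro _ ⟨x, hx, rfl⟩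
      exact hVmem x
    have hT'inv : ∀ (a : A) (y), y ∈ T' → ρ a y ∈ T' := by
      rintro a _ ⟨x, hx, rfl⟩
      exact ⟨π a x, hT a x hx, hinv a x⟩
    have hT'ne : T' ≠ ⊥ := by
      intro h
      apply hTbot
      rw [Submodule.eq_bot_iff] at h ⊢
      intro x hx
      exact hVinj (by rw [h (V x) ⟨x, hx, rfl⟩, map_zero])
    have h1 : k ≤ Module.finrank ℂ T' := Nat.find_le ⟨T', hT'inv, hT'ne, rfl⟩
    have hT'S : T' = S :=
      Submodule.eq_of_le_of_finrank_le hT'le (le_trans (le_of_eq hSrank) h1)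
    rw [Submodule.eq_top_iff']
    intro x
    have hxS : V x ∈ T' := hT'S.symm ▸ hVmem x
    obtain ⟨x', hx', hxx⟩ := hxS
    rwa [← hVinj hxx]
  obtain ⟨p, hp, hπp⟩ := hkazhdan k hkpos π hirr
  have hρp : ρ p = 0 := hvanish p (subset_closure (Ideal.subset_span hp))
  haveI : Nontrivial (EuclideanSpace ℂ (Fin k)) :=
    Module.nontrivial_of_finrank_pos (R := ℂ)
      (by rw [finrank_euclideanSpace_fin]; exact hkpos)
  obtain ⟨v, hv⟩ := exists_ne (0 : EuclideanSpace ℂ (Fin k))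
  apply hv
  have h10 : (1 : EuclideanSpace ℂ (Fin k) →L[ℂ] EuclideanSpace ℂ (Fin k)) v = 0 := by
    rw [← hπp]
    show adjoint V (ρ p (V v)) = 0
    rw [hρp]
    simp
  simpa using h10
end

section
/- If T is a nonzero compact operator in the commutant of a representation ρ(A) ⊆ B(H), then the commutant ρ(A)′ contains a nonzero finite-rank projection, and consequently A has a nonzero finite-dimensional representation (compression of ρ to the range of that projection). -/
open ContinuousLinearMap RCLike Filter Topology
open scoped InnerProductSpace

section Aux

variable {E F : Type*} [NormedAddCommGroup E] [InnerProductSpace ℂ E] [CompleteSpace E]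
  [NormedAddCommGroup F] [InnerProductSpace ℂ F] [CompleteSpace F]


theorem my_near_max (S : E →L[ℂ] E) (hsa : IsSelfAdjoint S)
    (hpos : ∀ x : E, 0 ≤ re ⟪S x, x⟫_ℂ) (hS0 : S ≠ 0) {ε : ℝ} (hε : 0 < ε) :
    ∃ x : E, ‖x‖ = 1 ∧ ‖S‖ - ε < re ⟪S x, x⟫_ℂ := by
  by_contra hcon
  push_neg at hcon
  set M := ‖S‖ - ε with hM
  obtain ⟨z, hz⟩ : ∃ z : E, S z ≠ 0 := by
    by_contra h; push_neg at h; exact hS0 (by ext x; simp [h])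
  have hz0 : z ≠ 0 := fun h => hz (by simp [h])
  have hunitz : ‖(‖z‖⁻¹ : ℝ) • z‖ = 1 := by
    simp [norm_smul, inv_mul_cancel₀ (norm_ne_zero_iff.mpr hz0)]
  have hM0 : 0 ≤ M := le_trans (hpos _) (hcon _ hunitz)
  have hsmul : ∀ (r : ℝ) (u v : E), re ⟪S (r • u), r • v⟫_ℂ = r ^ 2 * re ⟪S u, v⟫_ℂ := by
    intro r u v
    rw [real_smul_eq_coe_smul (K := ℂ) r u, real_smul_eq_coe_smul (K := ℂ) r v,
      map_smul, inner_smul_left, inner_smul_right]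
    rw [RCLike.conj_ofReal, ← mul_assoc, ← RCLike.ofReal_mul, RCLike.re_ofReal_mul]
    ring
  have hsym : ∀ u v : E, re ⟪S u, v⟫_ℂ = re ⟪S v, u⟫_ℂ := by
    intro u v
    conv_lhs => rw [← hsa.adjoint_eq]
    rw [adjoint_inner_left]
    exact inner_re_symm _ _
  -- quadratic form bound for all vectors
  have hq : ∀ x : E, re ⟪S x, x⟫_ℂ ≤ M * ‖x‖ ^ 2 := by
    intro x
    rcases eq_or_ne x 0 with rfl | hx
    · simp
    · have h1 : ‖(‖x‖⁻¹ : ℝ) • x‖ = 1 := by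
        simp [norm_smul, inv_mul_cancel₀ (norm_ne_zero_iff.mpr hx)]
      have h2 := hcon _ h1
      rw [hsmul] at h2
      have hx2 : (0:ℝ) < ‖x‖ ^ 2 := pow_pos (norm_pos_iff.mpr hx) 2
      have h3 : (‖x‖⁻¹)^2 = (‖x‖^2)⁻¹ := by rw [sq, sq]; ring
      rw [h3] at h2
      calc re ⟪S x, x⟫_ℂ = (‖x‖^2) * ((‖x‖^2)⁻¹ * re ⟪S x, x⟫_ℂ) := by
            rw [← mul_assoc, mul_inv_cancel₀ hx2.ne', one_mul]
        _ ≤ (‖x‖^2) * M := mul_le_mul_of_nonneg_left h2 (le_of_lt hx2)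
        _ = M * ‖x‖^2 := by ring
  -- polarization bound
  have hpol : ∀ x y : E, 4 * re ⟪S x, y⟫_ℂ ≤ M * ‖x + y‖ ^ 2 := by
    intro x y
    have key : re ⟪S (x + y), x + y⟫_ℂ - re ⟪S (x - y), x - y⟫_ℂ = 4 * re ⟪S x, y⟫_ℂ := by
      have e1 : ⟪S (x+y), x+y⟫_ℂ = ⟪S x, x⟫_ℂ + ⟪S x, y⟫_ℂ + ⟪S y, x⟫_ℂ + ⟪S y, y⟫_ℂ := by
        rw [map_add, inner_add_left, inner_add_right, inner_add_right]; ring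
      have e2 : ⟪S (x-y), x-y⟫_ℂ = ⟪S x, x⟫_ℂ - ⟪S x, y⟫_ℂ - ⟪S y, x⟫_ℂ + ⟪S y, y⟫_ℂ := by
        rw [map_sub, inner_sub_left, inner_sub_right, inner_sub_right]; ring
      rw [e1, e2]
      simp only [map_add, map_sub]
      rw [hsym y x]
      ring
    have h1 := hq (x + y)
    have h2 : 0 ≤ re ⟪S (x - y), x - y⟫_ℂ := hpos _
    linarith
  -- norm bound
  have hnorm : ∀ x : E, ‖x‖ = 1 → ‖S x‖ ≤ M := by
    intro x hx1
    rcases eq_or_ne (S x) 0 with h0 | h0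
    · rw [h0]; simpa using hM0
    · set y := (‖S x‖⁻¹ : ℝ) • S x with hy'
      have hyn : ‖y‖ = 1 := by
        simp [hy', norm_smul, inv_mul_cancel₀ (norm_ne_zero_iff.mpr h0)]
      have hre : re ⟪S x, y⟫_ℂ = ‖S x‖ := by
        rw [hy', real_smul_eq_coe_smul (K := ℂ), inner_smul_right]
        rw [inner_self_eq_norm_sq_to_K]
        have h4 : ‖S x‖ ≠ 0 := norm_ne_zero_iff.mpr h0
        rw [← RCLike.ofReal_pow, ← RCLike.ofReal_mul, RCLike.ofReal_re, sq]
        field_simp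
      have := hpol x y
      rw [hre] at this
      have hxy : ‖x + y‖ ^ 2 ≤ 4 := by
        have : ‖x + y‖ ≤ 2 := by
          calc ‖x + y‖ ≤ ‖x‖ + ‖y‖ := norm_add_le _ _
            _ = 2 := by rw [hx1, hyn]; norm_num
        nlinarith [norm_nonneg (x + y)]
      nlinarith
  have : ‖S‖ ≤ M := S.opNorm_le_bound hM0 (by
    intro x
    rcases eq_or_ne x 0 with rfl | hx
    · simp
    · have h1 : ‖(‖x‖⁻¹ : ℝ) • x‖ = 1 := by
        simp [norm_smul, inv_mul_cancel₀ (norm_ne_zero_iff.mpr hx)]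
      have h2 := hnorm _ h1
      rw [map_smul_of_tower, norm_smul, Real.norm_eq_abs, abs_of_nonneg (by positivity)] at h2
      have h5 := mul_le_mul_of_nonneg_left h2 (norm_nonneg x)
      rw [← mul_assoc, mul_inv_cancel₀ (norm_ne_zero_iff.mpr hx), one_mul] at h5
      linarith [h5])
  linarith

theorem my_exists_eigen (S : E →L[ℂ] E) (hSc : IsCompactOperator (S : E → E))
    (hsa : IsSelfAdjoint S) (hpos : ∀ x : E, 0 ≤ re ⟪S x, x⟫_ℂ) (hS0 : S ≠ 0)
    (hnm : ∀ {ε : ℝ}, 0 < ε → ∃ x : E, ‖x‖ = 1 ∧ ‖S‖ - ε < re ⟪S x, x⟫_ℂ) :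
    ∃ v : E, v ≠ 0 ∧ S v = (‖S‖ : ℂ) • v := by
  set M : ℝ := ‖S‖ with hMdef
  have hMpos : 0 < M := norm_pos_iff.mpr hS0
  -- choose a maximizing sequence
  have hseq : ∀ n : ℕ, ∃ x : E, ‖x‖ = 1 ∧ M - 1/(n+1) < re ⟪S x, x⟫_ℂ := by
    intro n
    exact hnm (by positivity)
  choose u hu1 hu2 using hseq
  have hub : ∀ n, re ⟪S (u n), u n⟫_ℂ ≤ M := by
    intro n
    calc re ⟪S (u n), u n⟫_ℂ ≤ ‖⟪S (u n), u n⟫_ℂ‖ := RCLike.re_le_norm _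
      _ ≤ ‖S (u n)‖ * ‖u n‖ := norm_inner_le_norm _ _
      _ ≤ (‖S‖ * ‖u n‖) * ‖u n‖ := by gcongr; exact S.le_opNorm _
      _ = M := by rw [hu1]; ring
  have htend : Tendsto (fun n => re ⟪S (u n), u n⟫_ℂ) atTop (𝓝 M) := by
    have h1 : Tendsto (fun n : ℕ => M - 1/(n+1)) atTop (𝓝 M) := by
      have := tendsto_one_div_add_atTop_nhds_zero_nat (𝕜 := ℝ)
      have h2 := Tendsto.const_sub M this
      simpa using h2
    exact tendsto_of_tendsto_of_tendsto_of_le_of_le (h := fun n => M) h1 tendsto_const_nhds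
      (fun n => (hu2 n).le) hub
  -- ‖S u n - M u n‖² → 0
  have hdiff : Tendsto (fun n => S (u n) - (M : ℂ) • u n) atTop (𝓝 0) := by
    have hb : ∀ n, ‖S (u n) - (M : ℂ) • u n‖^2 ≤ 2*M^2 - 2*M*re ⟪S (u n), u n⟫_ℂ := by
      intro n
      have hexp : ‖S (u n) - (M : ℂ) • u n‖^2
          = ‖S (u n)‖^2 - 2*M*re ⟪S (u n), u n⟫_ℂ + M^2 := by
        rw [@norm_sub_sq ℂ]
        rw [inner_smul_right, norm_smul]
        simp only [RCLike.mul_re, RCLike.ofReal_re, RCLike.ofReal_im]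
        rw [hu1]
        simp [Complex.norm_real, abs_of_pos hMpos]
        ring
      rw [hexp]
      have : ‖S (u n)‖ ≤ M := by
        calc ‖S (u n)‖ ≤ ‖S‖ * ‖u n‖ := S.le_opNorm _
          _ = M := by rw [hu1]; ring
      nlinarith [norm_nonneg (S (u n))]
    have h0 : Tendsto (fun n => 2*M^2 - 2*M*re ⟪S (u n), u n⟫_ℂ) atTop (𝓝 0) := by
      have := htend.const_mul (2*M)
      have h2 := Tendsto.const_sub (2*M^2) this
      have h3 : 2*M^2 - 2*M*M = 0 := by ring
      rw [h3] at h2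
      exact h2
    -- squeeze the squared norms, then take square roots
    have hsq : Tendsto (fun n => ‖S (u n) - (M : ℂ) • u n‖^2) atTop (𝓝 0) :=
      squeeze_zero (fun n => by positivity) hb h0
    have hnrm : Tendsto (fun n => ‖S (u n) - (M : ℂ) • u n‖) atTop (𝓝 0) := by
      have := hsq.sqrt
      simpa [Real.sqrt_sq (norm_nonneg _)] using this
    exact tendsto_zero_iff_norm_tendsto_zero.mpr hnrm
  -- use compactness to extract a convergent subsequence of S (u n)
  obtain ⟨C, hCcomp, hCsub⟩ := hSc.image_closedBall_subset_compact 1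
  have hmem : ∀ n, S (u n) ∈ C := fun n =>
    hCsub ⟨u n, by simp [Metric.mem_closedBall, hu1], rfl⟩
  obtain ⟨y, hyC, φ, hφmono, hφtend⟩ := hCcomp.tendsto_subseq hmem
  -- M • u (φ k) → y
  have h5 : Tendsto (fun k => (M : ℂ) • u (φ k)) atTop (𝓝 y) := by
    have hd := (hdiff.comp hφmono.tendsto_atTop)
    have : (fun k => (M : ℂ) • u (φ k))
        = fun k => (S (u (φ k))) - (S (u (φ k)) - (M : ℂ) • u (φ k)) := by
      funext k; abel
    rw [this]
    simpa using hφtend.sub hd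
  set v : E := ((M : ℂ))⁻¹ • y with hv
  have h6 : Tendsto (fun k => u (φ k)) atTop (𝓝 v) := by
    have := h5.const_smul ((M : ℂ))⁻¹
    have hM0 : (M : ℂ) ≠ 0 := by
      simpa using hMpos.ne'
    have heq : (fun k => u (φ k)) = fun k => ((M:ℂ))⁻¹ • ((M:ℂ) • u (φ k)) := by
      funext k; rw [smul_smul, inv_mul_cancel₀ hM0, one_smul]
    rw [hv, heq]
    exact this
  have hv1 : ‖v‖ = 1 := by
    have := (continuous_norm.tendsto v).comp h6
    have h7 : Tendsto (fun k => ‖u (φ k)‖) atTop (𝓝 ‖v‖) := this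
    have h8 : Tendsto (fun k : ℕ => (1:ℝ)) atTop (𝓝 ‖v‖) := by
      simpa [hu1] using h7
    exact (tendsto_nhds_unique tendsto_const_nhds h8).symm
  refine ⟨v, by simp [← norm_pos_iff, hv1], ?_⟩
  have h9 : Tendsto (fun k => S (u (φ k))) atTop (𝓝 (S v)) :=
    (S.continuous.tendsto v).comp h6
  have h10 : S v = y := tendsto_nhds_unique h9 hφtend
  rw [h10, hv, smul_smul, mul_inv_cancel₀ (by simpa using hMpos.ne' : (M:ℂ) ≠ 0), one_smul]

-- orthogonal projection onto invariant subspace commutes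
theorem my_proj_comm (K : Submodule ℂ E) [K.HasOrthogonalProjection] (B : E →L[ℂ] E)
    (h1 : ∀ x ∈ K, B x ∈ K) (h2 : ∀ x ∈ K, (adjoint B) x ∈ K) :
    (K.subtypeL ∘L K.orthogonalProjectionOnto) ∘L B = B ∘L (K.subtypeL ∘L K.orthogonalProjectionOnto) := by
  ext x
  set u : E := (K.orthogonalProjectionOnto x : E) with hu
  have huK : u ∈ K := (K.orthogonalProjectionOnto x).2
  have hw : x - u ∈ Kᗮ := Submodule.sub_starProjection_mem_orthogonal x
  have hBw : B (x - u) ∈ Kᗮ := by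
    intro k hk
    rw [← adjoint_inner_left B (x - u) k]
    exact hw _ (h2 k hk)
  have hx : x = u + (x - u) := by abel
  simp only [coe_comp', Function.comp_apply, Submodule.coe_subtypeL', Submodule.coe_subtype]
  conv_lhs => rw [hx]
  rw [map_add, map_add, Submodule.coe_add, (by exact Submodule.starProjection_eq_self_iff.mpr (h1 u huK) :
      ((K.orthogonalProjectionOnto (B u) : K) : E) = B u),
    Submodule.orthogonalProjectionOnto_apply_of_mem_orthogonal hBw]
  simp [hu]

theorem my_compression {A : Type*} [NormedRing A] [StarRing A] [CStarRing A] [NormedAlgebra ℂ A]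
    [CompleteSpace A] (ρ : A →⋆ₐ[ℂ] (E →L[ℂ] E)) (K : Submodule ℂ E) [CompleteSpace K]
    (hinv : ∀ a : A, ∀ x ∈ K, ρ a x ∈ K) :
    Nonempty (A →⋆ₐ[ℂ] (K →L[ℂ] K)) := by
  have hproj : ∀ z : E, z ∈ K → ((K.orthogonalProjectionOnto z : K) : E) = z := by
    intro z hz
    exact Submodule.starProjection_eq_self_iff.mpr hz
  refine ⟨{ toFun := fun a => K.orthogonalProjectionOnto ∘L (ρ a) ∘L K.subtypeL
            map_one' := ?_
            map_mul' := ?_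
            map_zero' := ?_
            map_add' := ?_
            commutes' := ?_
            map_star' := ?_ }⟩
  · ext k
    simp [hproj _ k.2]
  · intro a b
    ext k
    simp only [coe_comp', Function.comp_apply, Submodule.coe_subtypeL', Submodule.coe_subtype,
      ContinuousLinearMap.mul_apply, map_mul]
    congr 1
    rw [hproj _ (hinv b (k : E) k.2)]
  · ext k; simp
  · intro a b; ext k; simp
  · intro c
    ext k
    simp only [coe_comp', Function.comp_apply, Submodule.coe_subtypeL', Submodule.coe_subtype,
      AlgHomClass.commutes, Algebra.algebraMap_eq_smul_one, smul_apply, ContinuousLinearMap.one_apply, map_smul,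
      Submodule.orthogonalProjectionOnto_mem_subspace_eq_self, Submodule.coe_smul, map_one]
  · intro a
    show K.orthogonalProjectionOnto ∘L (ρ (star a)) ∘L K.subtypeL
        = star (K.orthogonalProjectionOnto ∘L (ρ a) ∘L K.subtypeL)
    rw [star_eq_adjoint, ← comp_assoc, adjoint_comp, adjoint_comp,
      Submodule.adjoint_orthogonalProjectionOnto, Submodule.adjoint_subtypeL,
      ← star_eq_adjoint, map_star, comp_assoc]

noncomputable def my_conjSAH (e : E ≃ₗᵢ[ℂ] F) : (E →L[ℂ] E) →⋆ₐ[ℂ] (F →L[ℂ] F) := by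
  let ec : E →L[ℂ] F := (e.toContinuousLinearEquiv : E →L[ℂ] F)
  let ec' : F →L[ℂ] E := (e.symm.toContinuousLinearEquiv : F →L[ℂ] E)
  have hcc : ec' ∘L ec = ContinuousLinearMap.id ℂ E := by ext x; simp [ec, ec']
  have hcc' : ec ∘L ec' = ContinuousLinearMap.id ℂ F := by ext x; simp [ec, ec']
  have hadj : adjoint ec = ec' := by
    symm
    rw [eq_adjoint_iff]
    intro x y
    calc ⟪ec' x, y⟫_ℂ = ⟪e (e.symm x), e y⟫_ℂ := by rw [e.inner_map_map]; simp [ec', ec]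
      _ = ⟪x, ec y⟫_ℂ := by simp [ec]
  have hadj' : adjoint ec' = ec := by rw [← hadj, adjoint_adjoint]
  exact
  { toFun := fun f => ec ∘L f ∘L ec'
    map_one' := by ext x; simp [ec, ec']
    map_mul' := fun f g => by ext x; simp [ec, ec', mul_apply]
    map_zero' := by simp
    map_add' := fun f g => by simp [add_comp, comp_add]
    commutes' := fun c => by
      ext x
      simp [ec, ec', Algebra.algebraMap_eq_smul_one]
    map_star' := fun f => by
      simp only [star_eq_adjoint]
      rw [← comp_assoc, adjoint_comp, adjoint_comp, hadj, hadj', comp_assoc] }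
end Aux

/-- If `T` is a nonzero compact operator commuting with a representation `ρ(A) ⊆ B(H)`,
then the commutant `ρ(A)'` contains a nonzero finite-rank (orthogonal) projection, and
consequently `A` admits a nonzero finite-dimensional representation (the compression of
`ρ` to the range of that projection). -/
theorem compact_in_commutant_gives_finite_rank_projection_and_fd_rep
    {A : Type*} [NormedRing A] [StarRing A] [CStarRing A] [NormedAlgebra ℂ A]
    [CompleteSpace A]
    {H : Type*} [NormedAddCommGroup H] [InnerProductSpace ℂ H] [CompleteSpace H]
    (ρ : A →⋆ₐ[ℂ] (H →L[ℂ] H))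
    (T : H →L[ℂ] H) (hTc : IsCompactOperator T) (hT0 : T ≠ 0)
    (hcomm : ∀ a : A, T.comp (ρ a) = (ρ a).comp T) :
    (∃ p : H →L[ℂ] H, p ≠ 0 ∧ p.comp p = p ∧ adjoint p = p ∧
        FiniteDimensional ℂ (LinearMap.range (p : H →ₗ[ℂ] H)) ∧
        ∀ a : A, p.comp (ρ a) = (ρ a).comp p) ∧
      ∃ (m : ℕ) (_ : 0 < m),
        Nonempty (A →⋆ₐ[ℂ] (EuclideanSpace ℂ (Fin m) →L[ℂ] EuclideanSpace ℂ (Fin m))) := by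
  classical
  set S : H →L[ℂ] H := (adjoint T) ∘L T with hSdef
  -- the adjoint of T also commutes with the representation
  have hadjcomm : ∀ a : A, (adjoint T) ∘L (ρ a) = (ρ a) ∘L (adjoint T) := by
    intro a
    have h1 := hcomm (star a)
    have h2 : ρ (star a) = adjoint (ρ a) := by rw [map_star, star_eq_adjoint]
    rw [h2] at h1
    have h3 := congrArg adjoint h1
    rw [adjoint_comp, adjoint_comp, adjoint_adjoint] at h3
    exact h3.symm
  -- S commutes with the representation
  have hScomm : ∀ a : A, S ∘L (ρ a) = (ρ a) ∘L S := by
    intro a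
    rw [hSdef, comp_assoc, hcomm a, ← comp_assoc, hadjcomm a, comp_assoc]
  -- S is self-adjoint and positive
  have hSsa : IsSelfAdjoint S := by
    rw [IsSelfAdjoint, star_eq_adjoint, hSdef, adjoint_comp, adjoint_adjoint]
  have hpos : ∀ x : H, 0 ≤ re ⟪S x, x⟫_ℂ := by
    intro x
    rw [hSdef, ← apply_norm_sq_eq_inner_adjoint_left]
    positivity
  have hS0 : S ≠ 0 := by
    intro h
    apply hT0
    ext x
    have h1 : ‖T x‖ ^ 2 = re ⟪S x, x⟫_ℂ := apply_norm_sq_eq_inner_adjoint_left T x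
    rw [h, zero_apply] at h1
    simp only [inner_zero_left, map_zero] at h1
    have := pow_eq_zero_iff (n := 2) (by norm_num) |>.mp (by rw [h1] : ‖T x‖ ^ 2 = 0)
    simpa using norm_eq_zero.mp this
  have hSc : IsCompactOperator (S : H → H) := by
    have : (S : H → H) = (adjoint T) ∘ (T : H → H) := rfl
    rw [this]
    exact hTc.clm_comp (adjoint T)
  -- extract an eigenvector with eigenvalue ‖S‖ > 0
  obtain ⟨v, hv0, hveig⟩ :=
    my_exists_eigen S hSc hSsa hpos hS0 (fun {ε} hε => my_near_max S hSsa hpos hS0 hε)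
  set M : ℝ := ‖S‖ with hMdef
  have hMpos : 0 < M := norm_pos_iff.mpr hS0
  -- the eigenspace
  set K : Submodule ℂ H := LinearMap.ker ((S - (M : ℂ) • ContinuousLinearMap.id ℂ H : H →L[ℂ] H) : H →ₗ[ℂ] H) with hKdef
  have hmemK : ∀ x : H, x ∈ K ↔ S x = (M : ℂ) • x := by
    intro x
    rw [hKdef, LinearMap.mem_ker]
    constructor
    · intro h
      have : S x - (M : ℂ) • x = 0 := h
      linear_combination (norm := abel) this
    · intro h
      show S x - (M : ℂ) • x = 0
      rw [h, sub_self]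
  have hvK : v ∈ K := (hmemK v).mpr hveig
  have hKclosed : IsClosed (K : Set H) :=
    (ContinuousLinearMap.isClosed_ker (S - (M : ℂ) • ContinuousLinearMap.id ℂ H))
  haveI : CompleteSpace K := hKclosed.completeSpace_coe
  -- K is finite dimensional
  obtain ⟨C, hCcomp, hCsub⟩ := hSc.image_closedBall_subset_compact 1
  have hKfd : FiniteDimensional ℂ K := by
    apply FiniteDimensional.of_isCompact_closedBall₀ ℂ (one_pos)
    rw [Topology.IsEmbedding.subtypeVal.isCompact_iff]
    have himg : (Subtype.val '' Metric.closedBall (0 : K) 1)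
        = (K : Set H) ∩ Metric.closedBall (0 : H) 1 := by
      ext z
      simp only [Set.mem_image, Metric.mem_closedBall, dist_zero_right, Set.mem_inter_iff,
        SetLike.mem_coe]
      constructor
      · rintro ⟨w, hw, rfl⟩
        exact ⟨w.2, hw⟩
      · rintro ⟨hz, hn⟩
        exact ⟨⟨z, hz⟩, hn, rfl⟩
    rw [himg]
    have hsub : (K : Set H) ∩ Metric.closedBall (0 : H) 1
        ⊆ (fun z => ((M : ℂ))⁻¹ • z) '' C := by
      rintro x ⟨hxK, hxB⟩
      refine ⟨S x, hCsub ⟨x, hxB, rfl⟩, ?_⟩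
      have hMne : (M : ℂ) ≠ 0 := by simpa using hMpos.ne'
      show ((M : ℂ))⁻¹ • (S x) = x
      rw [(hmemK x).mp hxK, smul_smul, inv_mul_cancel₀ hMne, one_smul]
    exact ((hCcomp.image (continuous_const_smul _)).of_isClosed_subset
      (hKclosed.inter Metric.isClosed_closedBall) hsub)
  haveI := hKfd
  -- the representation maps K (and with adjoints) into K
  have hinv : ∀ a : A, ∀ x ∈ K, ρ a x ∈ K := by
    intro a x hx
    rw [hmemK] at hx ⊢
    have h1 := congrArg (fun f : H →L[ℂ] H => f x) (hScomm a)
    simp only [coe_comp', Function.comp_apply] at h1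
    rw [h1, hx, map_smul]
  -- the orthogonal projection onto K
  set p : H →L[ℂ] H := K.subtypeL ∘L K.orthogonalProjectionOnto with hpdef
  have hpv : p v = v := by
    simp only [hpdef, coe_comp', Function.comp_apply, Submodule.coe_subtypeL',
      Submodule.coe_subtype]
    exact Submodule.starProjection_eq_self_iff.mpr hvK
  have hrange : LinearMap.range (p : H →ₗ[ℂ] H) ≤ K := by
    rintro _ ⟨x, rfl⟩
    exact ((K.orthogonalProjectionOnto) x).2
  constructor
  · refine ⟨p, ?_, ?_, ?_, ?_, ?_⟩
    · intro h
      exact hv0 (by rw [← hpv, h, zero_apply])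
    · ext x
      simp only [hpdef, coe_comp', Function.comp_apply, Submodule.coe_subtypeL',
        Submodule.coe_subtype, Submodule.orthogonalProjectionOnto_mem_subspace_eq_self]
    · have := isSelfAdjoint_starProjection K
      rw [IsSelfAdjoint, star_eq_adjoint] at this
      exact this
    · exact Submodule.finiteDimensional_of_le hrange
    · intro a
      apply my_proj_comm K (ρ a)
      · exact hinv a
      · intro x hx
        have : adjoint (ρ a) = ρ (star a) := by rw [← star_eq_adjoint, ← map_star]
        rw [this]
        exact hinv (star a) x hx
  · -- the finite-dimensional representation
    haveI : Nontrivial K := nontrivial_of_ne ⟨v, hvK⟩ 0 (by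
      intro h
      exact hv0 (congrArg Subtype.val h))
    refine ⟨Module.finrank ℂ K, Module.finrank_pos, ?_⟩
    obtain ⟨π⟩ := my_compression ρ K hinv
    exact ⟨(my_conjSAH ((stdOrthonormalBasis ℂ K).repr)).comp π⟩
end

section
/- If B is a C*-algebra with property T and C is any unital C*-algebra with no tracial states, then B ⊕ C has property T. -/
open Filter MulOpposite
open scoped ComplexOrder ComplexInnerProductSpace

section helpers

variable {H : Type} [NormedAddCommGroup H] [InnerProductSpace ℂ H] [CompleteSpace H]

lemma proj_contract (T : H →L[ℂ] H) (h1 : star T = T) (h2 : T * T = T) (x : H) :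
    ‖T x‖ ≤ ‖x‖ := by
  have h3 : ⟪T x, T x⟫ = ⟪x, T x⟫ := by
    have := ContinuousLinearMap.adjoint_inner_right T x (T x)
    rw [← ContinuousLinearMap.star_eq_adjoint, h1] at this
    rw [← this]
    congr 1
    calc T (T x) = (T * T) x := rfl
    _ = T x := by rw [h2]
  have h4 : (‖T x‖ : ℝ) ^ 2 = RCLike.re ⟪x, T x⟫ := by
    rw [← h3, inner_self_eq_norm_sq]
  have h5 : RCLike.re ⟪x, T x⟫ ≤ ‖x‖ * ‖T x‖ := by
    calc RCLike.re ⟪x, T x⟫ ≤ ‖⟪x, T x⟫‖ := RCLike.re_le_norm _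
    _ ≤ ‖x‖ * ‖T x‖ := norm_inner_le_norm _ _
  nlinarith [norm_nonneg (T x), norm_nonneg x]

/-- restriction of a continuous linear map to an invariant submodule -/
def restrictCLM (K : Submodule ℂ H) (T : H →L[ℂ] H) (hT : ∀ x ∈ K, T x ∈ K) : K →L[ℂ] K where
  toLinearMap := (T : H →ₗ[ℂ] H).restrict hT
  cont := Continuous.subtype_mk (T.continuous.comp continuous_subtype_val) _

omit [CompleteSpace H] in
@[simp] lemma restrictCLM_apply (K : Submodule ℂ H) (T : H →L[ℂ] H)
    (hT : ∀ x ∈ K, T x ∈ K) (x : K) : (restrictCLM K T hT x : H) = T x := rfl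

lemma restrictCLM_star (K : Submodule ℂ H) [CompleteSpace K]
    (T : H →L[ℂ] H) (hT : ∀ x ∈ K, T x ∈ K) (hT' : ∀ x ∈ K, star T x ∈ K) :
    restrictCLM K (star T) hT' = star (restrictCLM K T hT) := by
  conv_rhs => rw [ContinuousLinearMap.star_eq_adjoint]
  rw [ContinuousLinearMap.eq_adjoint_iff]
  intro x y
  show ⟪((star T) (x : H) : H), (y : H)⟫ = ⟪(x : H), T (y:H)⟫
  rw [ContinuousLinearMap.star_eq_adjoint, ContinuousLinearMap.adjoint_inner_left]

end helpers

/-- build a star algebra hom into the operators of an invariant subspace -/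
def buildLB {B : Type*} [Ring B] [StarRing B] [Algebra ℂ B]
    {H : Type} [NormedAddCommGroup H] [InnerProductSpace ℂ H] [CompleteSpace H]
    (K : Submodule ℂ H) [CompleteSpace K]
    (F : B → (H →L[ℂ] H))
    (hinv : ∀ b, ∀ x ∈ K, F b x ∈ K)
    (hone : ∀ x : K, F 1 (x : H) = (x : H))
    (hmul : ∀ b b', F (b * b') = F b * F b')
    (hadd : ∀ b b', F (b + b') = F b + F b')
    (hsmul : ∀ (z : ℂ) b, F (z • b) = z • F b)
    (hstar : ∀ b, F (star b) = star (F b)) :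
    B →⋆ₐ[ℂ] (K →L[ℂ] K) where
  toFun b := restrictCLM K (F b) (hinv b)
  map_one' := by
    ext x
    show F 1 (x : H) = ((1 : K →L[ℂ] K) x : H)
    rw [hone x]
    rfl
  map_mul' b b' := by
    ext x
    show F (b * b') (x : H) = F b (F b' (x : H))
    rw [hmul]
    rfl
  map_zero' := by
    ext x
    show F 0 (x : H) = ((0 : K →L[ℂ] K) x : H)
    have : F 0 = 0 := by
      have := hsmul 0 0
      simpa using this
    rw [this]
    rfl
  map_add' b b' := by
    ext x
    show F (b + b') (x : H) = ((restrictCLM K (F b) (hinv b) + restrictCLM K (F b') (hinv b')) x : H)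
    rw [hadd]
    rfl
  commutes' z := by
    ext x
    show F (algebraMap ℂ B z) (x : H) = ((algebraMap ℂ (K →L[ℂ] K) z) x : H)
    rw [Algebra.algebraMap_eq_smul_one (A := B), hsmul,
      ContinuousLinearMap.smul_apply, hone x, Algebra.algebraMap_eq_smul_one (A := K →L[ℂ] K)]
    rfl
  map_star' b := by
    have hT' : ∀ x ∈ K, star (F b) x ∈ K := by
      intro x hx
      rw [← hstar]
      exact hinv (star b) x hx
    rw [show star b = star b from rfl, ← restrictCLM_star K (F b) (hinv b) hT']
    ext x
    show F (star b) (x : H) = star (F b) (x : H)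
    rw [hstar]

@[simp] lemma buildLB_apply {B : Type*} [Ring B] [StarRing B] [Algebra ℂ B]
    {H : Type} [NormedAddCommGroup H] [InnerProductSpace ℂ H] [CompleteSpace H]
    (K : Submodule ℂ H) [CompleteSpace K]
    (F : B → (H →L[ℂ] H)) (hinv) (hone) (hmul) (hadd) (hsmul) (hstar) (b : B) (x : K) :
    ((buildLB K F hinv hone hmul hadd hsmul hstar b) x : H) = F b (x : H) := rfl


lemma trace_aux {C : Type*} [Ring C] [StarRing C] [Algebra ℂ C]
    {H : Type} [NormedAddCommGroup H] [InnerProductSpace ℂ H] [CompleteSpace H]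
    (T S : C → H →L[ℂ] H)
    (hmulT : ∀ c d, T (c * d) = T c * T d)
    (haddT : ∀ c d, T (c + d) = T c + T d)
    (hsmulT : ∀ (z : ℂ) c, T (z • c) = z • T c)
    (hstarT : ∀ c, T (star c) = star (T c))
    (hstarS : ∀ c, S (star c) = star (S c))
    (hTS : ∀ c d, Commute (T c) (S d))
    (ζ : ℕ → H) (hζle : ∀ n, ‖ζ n‖ ≤ 1) (hTζ : ∀ n, T 1 (ζ n) = ζ n)
    (happrox : ∀ c, Tendsto (fun n => ‖T c (ζ n) - S c (ζ n)‖) atTop (nhds 0))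
    (hnot : ¬ Tendsto (fun n => ‖ζ n‖) atTop (nhds 0)) :
    ∃ τ : C →ₗ[ℂ] ℂ, τ 1 = 1 ∧ (∀ c : C, 0 ≤ τ (star c * c)) ∧
      ∀ c d : C, τ (c * d) = τ (d * c) := by
  -- extract ε and an ultrafilter
  rw [Metric.tendsto_atTop] at hnot
  push_neg at hnot
  obtain ⟨ε, hε, hfreq'⟩ := hnot
  have hfreq : ∃ᶠ n in atTop, ε ≤ ‖ζ n‖ := by
    rw [frequently_atTop]
    intro N
    obtain ⟨n, hn1, hn2⟩ := hfreq' N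
    refine ⟨n, hn1, ?_⟩
    rwa [Real.dist_eq, sub_zero, abs_of_nonneg (norm_nonneg _)] at hn2
  haveI hNB : (atTop ⊓ Filter.principal {n : ℕ | ε ≤ ‖ζ n‖}).NeBot :=
    Filter.frequently_iff_neBot.mp hfreq
  obtain ⟨U, hU⟩ := Filter.exists_ultrafilter_le (atTop ⊓ Filter.principal {n : ℕ | ε ≤ ‖ζ n‖})
  have hUatTop : (U : Filter ℕ) ≤ atTop := hU.trans inf_le_left
  have hUS : ∀ᶠ n in (U : Filter ℕ), ε ≤ ‖ζ n‖ :=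
    (hU.trans inf_le_right) (Filter.mem_principal_self _)
  -- the approximate states
  set f : C → ℕ → ℂ := fun c n => (⟪ζ n, T c (ζ n)⟫) * ((‖ζ n‖ : ℂ) ^ 2)⁻¹ with hf
  have hbound : ∀ c n, ‖f c n‖ ≤ ‖T c‖ := by
    intro c n
    rcases eq_or_ne (ζ n) 0 with h | h
    · simp [hf, h, norm_nonneg]
    · have h0 : (0:ℝ) < ‖ζ n‖ := norm_pos_iff.mpr h
      have h1 : ‖(⟪ζ n, T c (ζ n)⟫)‖ ≤ ‖T c‖ * ‖ζ n‖ ^ 2 := by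
        calc ‖(⟪ζ n, T c (ζ n)⟫)‖ ≤ ‖ζ n‖ * ‖T c (ζ n)‖ := norm_inner_le_norm _ _
        _ ≤ ‖ζ n‖ * (‖T c‖ * ‖ζ n‖) := by
            have := (T c).le_opNorm (ζ n)
            nlinarith [norm_nonneg (ζ n)]
        _ = ‖T c‖ * ‖ζ n‖ ^ 2 := by ring
      have h2 : ‖((‖ζ n‖ : ℂ) ^ 2)⁻¹‖ = (‖ζ n‖ ^ 2)⁻¹ := by
        rw [norm_inv, norm_pow, Complex.norm_real, Real.norm_eq_abs, abs_of_nonneg (norm_nonneg _)]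
      show ‖(⟪ζ n, T c (ζ n)⟫) * ((‖ζ n‖ : ℂ) ^ 2)⁻¹‖ ≤ ‖T c‖
      rw [norm_mul, h2]
      calc ‖(⟪ζ n, T c (ζ n)⟫)‖ * (‖ζ n‖ ^ 2)⁻¹ ≤ (‖T c‖ * ‖ζ n‖ ^ 2) * (‖ζ n‖ ^ 2)⁻¹ := by
            apply mul_le_mul_of_nonneg_right h1 (by positivity)
      _ = ‖T c‖ := by field_simp
  -- limits along the ultrafilter
  have hlim : ∀ c : C, ∃ z : ℂ, Tendsto (f c) (U : Filter ℕ) (nhds z) := by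
    intro c
    have hc : (U.map (f c) : Filter ℂ) ≤ Filter.principal (Metric.closedBall 0 ‖T c‖) := by
      rw [Filter.le_principal_iff]
      rw [Ultrafilter.mem_coe, Ultrafilter.mem_map]
      apply Filter.univ_mem'
      intro n
      simp only [Set.mem_preimage, Metric.mem_closedBall, dist_zero_right]
      exact hbound c n
    obtain ⟨z, _, hz⟩ := (isCompact_closedBall (0:ℂ) ‖T c‖).ultrafilter_le_nhds (U.map (f c)) hc
    exact ⟨z, hz⟩
  set τf : C → ℂ := fun c => (hlim c).choose with hτf
  have hτ : ∀ c, Tendsto (f c) (U : Filter ℕ) (nhds (τf c)) := fun c => (hlim c).choose_spec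
  have huniq : ∀ {c : C} {z : ℂ}, Tendsto (f c) (U : Filter ℕ) (nhds z) → τf c = z :=
    fun h => tendsto_nhds_unique (hτ _) h
  -- linearity
  have hadd : ∀ c d : C, τf (c + d) = τf c + τf d := by
    intro c d
    apply huniq
    have : f (c + d) = fun n => f c n + f d n := by
      funext n
      simp only [hf, haddT, ContinuousLinearMap.add_apply, inner_add_right]
      ring
    rw [this]
    exact (hτ c).add (hτ d)
  have hsmul : ∀ (z : ℂ) (c : C), τf (z • c) = z * τf c := by
    intro z c
    apply huniq
    have : f (z • c) = fun n => z * f c n := by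
      funext n
      simp only [hf, hsmulT, ContinuousLinearMap.smul_apply, inner_smul_right]
      ring
    rw [this]
    exact (hτ c).const_mul z
  set τ : C →ₗ[ℂ] ℂ :=
    { toFun := τf
      map_add' := hadd
      map_smul' := hsmul } with hτdef
  refine ⟨τ, ?_, ?_, ?_⟩
  · -- τ 1 = 1
    show τf 1 = 1
    apply huniq
    apply Tendsto.congr' (f₁ := fun _ => (1:ℂ))
    · filter_upwards [hUS] with n hn
      have hne : ‖ζ n‖ ≠ 0 := ne_of_gt (lt_of_lt_of_le hε hn)
      have : f 1 n = (⟪ζ n, ζ n⟫) * ((‖ζ n‖ : ℂ) ^ 2)⁻¹ := by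
        simp only [hf, hTζ]
      rw [this, inner_self_eq_norm_sq_to_K,
        show (RCLike.ofReal ‖ζ n‖ : ℂ) = ((‖ζ n‖:ℝ):ℂ) from rfl]
      exact (mul_inv_cancel₀ (pow_ne_zero 2 (Complex.ofReal_ne_zero.mpr hne))).symm
    · exact tendsto_const_nhds
  · -- positivity
    intro c
    show (0:ℂ) ≤ τf (star c * c)
    have hcl : IsClosed {z : ℂ | 0 ≤ z} := by
      have : {z : ℂ | 0 ≤ z} = Complex.re ⁻¹' (Set.Ici 0) ∩ Complex.im ⁻¹' {0} := by
        ext z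
        simp [Complex.le_def, eq_comm]
      rw [this]
      exact (isClosed_Ici.preimage Complex.continuous_re).inter
        (isClosed_singleton.preimage Complex.continuous_im)
    refine hcl.mem_of_tendsto (hτ (star c * c)) (Filter.Eventually.of_forall fun n => ?_)
    show (0:ℂ) ≤ f (star c * c) n
    have h1 : f (star c * c) n = (⟪T c (ζ n), T c (ζ n)⟫) * ((‖ζ n‖ : ℂ) ^ 2)⁻¹ := by
      simp only [hf, hmulT, hstarT, ContinuousLinearMap.mul_apply]
      congr 1
      rw [ContinuousLinearMap.star_eq_adjoint, ContinuousLinearMap.adjoint_inner_right]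
    rw [h1, inner_self_eq_norm_sq_to_K,
      show (RCLike.ofReal ‖T c (ζ n)‖ : ℂ) = ((‖T c (ζ n)‖:ℝ):ℂ) from rfl,
      show ((‖T c (ζ n)‖:ℂ))^2 * ((‖ζ n‖:ℂ)^2)⁻¹
        = ((‖T c (ζ n)‖^2 * (‖ζ n‖^2)⁻¹ : ℝ):ℂ) from by push_cast; ring,
      Complex.zero_le_real]
    positivity
  · -- trace property
    intro c d
    show τf (c * d) = τf (d * c)
    apply huniq
    have hdiff : Tendsto (fun n => f (c * d) n - f (d * c) n) (U : Filter ℕ) (nhds 0) := by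
      apply squeeze_zero_norm' (a := fun n =>
        (‖T c‖ * (‖T d (ζ n) - S d (ζ n)‖ + ‖T (star d) (ζ n) - S (star d) (ζ n)‖)) * (ε ^ 2)⁻¹)
      · filter_upwards [hUS] with n hn
        have hεζ : ε ≤ ‖ζ n‖ := hn
        set u := ‖T d (ζ n) - S d (ζ n)‖ with hu
        set v := ‖T (star d) (ζ n) - S (star d) (ζ n)‖ with hv
        have key : (⟪ζ n, T c (T d (ζ n))⟫) - (⟪ζ n, T d (T c (ζ n))⟫)
            = (⟪ζ n, T c (T d (ζ n) - S d (ζ n))⟫)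
              + (⟪S (star d) (ζ n) - T (star d) (ζ n), T c (ζ n)⟫) := by
          have e1 : (⟪ζ n, T c (S d (ζ n))⟫) = (⟪S (star d) (ζ n), T c (ζ n)⟫) := by
            have hco : T c (S d (ζ n)) = S d (T c (ζ n)) := by
              have := (hTS c d).eq
              calc T c (S d (ζ n)) = (T c * S d) (ζ n) := rfl
              _ = (S d * T c) (ζ n) := by rw [this]
              _ = S d (T c (ζ n)) := rfl
            rw [hco, hstarS, ContinuousLinearMap.star_eq_adjoint,
              ← ContinuousLinearMap.adjoint_inner_left]
          have e2 : (⟪T (star d) (ζ n), T c (ζ n)⟫) = (⟪ζ n, T d (T c (ζ n))⟫) := by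
            rw [hstarT, ContinuousLinearMap.star_eq_adjoint,
              ContinuousLinearMap.adjoint_inner_left]
          rw [map_sub, inner_sub_right, inner_sub_left, e1, e2]
          ring
        have hb1 : ‖(⟪ζ n, T c (T d (ζ n) - S d (ζ n))⟫)‖ ≤ ‖T c‖ * u := by
          calc ‖(⟪ζ n, T c (T d (ζ n) - S d (ζ n))⟫)‖
              ≤ ‖ζ n‖ * ‖T c (T d (ζ n) - S d (ζ n))‖ := norm_inner_le_norm _ _
          _ ≤ 1 * (‖T c‖ * u) := by
              apply mul_le_mul (hζle n) ((T c).le_opNorm _) (norm_nonneg _)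
              exact zero_le_one
          _ = ‖T c‖ * u := one_mul _
        have hb2 : ‖(⟪S (star d) (ζ n) - T (star d) (ζ n), T c (ζ n)⟫)‖ ≤ ‖T c‖ * v := by
          calc ‖(⟪S (star d) (ζ n) - T (star d) (ζ n), T c (ζ n)⟫)‖
              ≤ ‖S (star d) (ζ n) - T (star d) (ζ n)‖ * ‖T c (ζ n)‖ := norm_inner_le_norm _ _
          _ ≤ v * (‖T c‖ * 1) := by
              apply mul_le_mul
              · rw [hv, norm_sub_rev]
              · calc ‖T c (ζ n)‖ ≤ ‖T c‖ * ‖ζ n‖ := (T c).le_opNorm _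
                _ ≤ ‖T c‖ * 1 := by
                    apply mul_le_mul_of_nonneg_left (hζle n) (norm_nonneg _)
              · exact norm_nonneg _
              · rw [hv]; exact norm_nonneg _
          _ = ‖T c‖ * v := by ring
        have hfd : f (c * d) n - f (d * c) n
            = ((⟪ζ n, T c (T d (ζ n))⟫) - (⟪ζ n, T d (T c (ζ n))⟫)) * ((‖ζ n‖ : ℂ) ^ 2)⁻¹ := by
          simp only [hf, hmulT, ContinuousLinearMap.mul_apply]
          ring
        have hinv : ‖((‖ζ n‖ : ℂ) ^ 2)⁻¹‖ ≤ (ε ^ 2)⁻¹ := by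
          rw [norm_inv, norm_pow, Complex.norm_real, Real.norm_eq_abs,
            abs_of_nonneg (norm_nonneg _)]
          apply inv_anti₀ (by positivity)
          nlinarith
        rw [hfd, norm_mul, key]
        have hnum : ‖(⟪ζ n, T c (T d (ζ n) - S d (ζ n))⟫)
            + (⟪S (star d) (ζ n) - T (star d) (ζ n), T c (ζ n)⟫)‖ ≤ ‖T c‖ * (u + v) := by
          calc _ ≤ ‖(⟪ζ n, T c (T d (ζ n) - S d (ζ n))⟫)‖
              + ‖(⟪S (star d) (ζ n) - T (star d) (ζ n), T c (ζ n)⟫)‖ := norm_add_le _ _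
          _ ≤ ‖T c‖ * u + ‖T c‖ * v := add_le_add hb1 hb2
          _ = ‖T c‖ * (u + v) := by ring
        apply mul_le_mul hnum hinv (norm_nonneg _)
        have : (0:ℝ) ≤ u := norm_nonneg _
        have : (0:ℝ) ≤ v := norm_nonneg _
        positivity
      · have h1 : Tendsto (fun n => ‖T d (ζ n) - S d (ζ n)‖
            + ‖T (star d) (ζ n) - S (star d) (ζ n)‖) (U : Filter ℕ) (nhds 0) := by
          have := ((happrox d).add (happrox (star d))).mono_left hUatTop
          simpa using this
        have := (h1.const_mul ‖T c‖).mul_const ((ε ^ 2)⁻¹)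
        simpa using this
    have := hdiff.add (hτ (d * c))
    simpa using this

set_option maxHeartbeats 2000000 in
/-- If `B` is a C*-algebra with property T and `C` is any unital C*-algebra without
tracial states, then the direct sum `B ⊕ C` has property T. -/

theorem propertyT_of_directSum_with_traceless
    {B : Type*} [NormedRing B] [StarRing B] [CStarRing B] [NormedAlgebra ℂ B]
    [CompleteSpace B]
    {C : Type*} [NormedRing C] [StarRing C] [CStarRing C] [NormedAlgebra ℂ C]
    [CompleteSpace C]
    (hB : PropertyT B)
    (hC : ¬∃ τ : C →ₗ[ℂ] ℂ, τ 1 = 1 ∧ (∀ c : C, 0 ≤ τ (star c * c)) ∧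
      ∀ c d : C, τ (c * d) = τ (d * c)) :
    PropertyT (B × C) := by
  intro H _ _ _ L R hcomm hex
  obtain ⟨ξ, hξ1, hξc⟩ := hex
  have mulap : ∀ (A A' : H →L[ℂ] H) (x : H), (A * A') x = A (A' x) := fun _ _ _ => rfl
  set p : B × C := (1, 0) with hp
  set q : B × C := (0, 1) with hq
  set P : H →L[ℂ] H := L p with hPdef
  set P' : H →L[ℂ] H := L q with hP'def
  set Q : H →L[ℂ] H := R (op p) with hQdef
  set Q' : H →L[ℂ] H := R (op q) with hQ'def
  -- algebra identities in B × C
  have hpp : p * p = p := by simp [hp, Prod.ext_iff]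
  have hqq : q * q = q := by simp [hq, Prod.ext_iff]
  have hpq : p * q = 0 := by simp [hp, hq, Prod.ext_iff]
  have hqp : q * p = 0 := by simp [hp, hq, Prod.ext_iff]
  have hpqsum : p + q = 1 := by simp [hp, hq, Prod.ext_iff]
  have hpstar : star p = p := by simp [hp, Prod.ext_iff]
  have hqstar : star q = q := by simp [hq, Prod.ext_iff]
  -- operator identities
  have hPs : star P = P := by rw [hPdef, ← map_star, hpstar]
  have hP's : star P' = P' := by rw [hP'def, ← map_star, hqstar]
  have hQs : star Q = Q := by rw [hQdef, ← map_star, ← op_star, hpstar]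
  have hQ's : star Q' = Q' := by rw [hQ'def, ← map_star, ← op_star, hqstar]
  have hPi : P * P = P := by rw [hPdef, ← map_mul, hpp]
  have hP'i : P' * P' = P' := by rw [hP'def, ← map_mul, hqq]
  have hQi : Q * Q = Q := by rw [hQdef, ← map_mul, ← op_mul, hpp]
  have hQ'i : Q' * Q' = Q' := by rw [hQ'def, ← map_mul, ← op_mul, hqq]
  have hQ'Q : Q' * Q = 0 := by rw [hQdef, hQ'def, ← map_mul, ← op_mul, hpq, op_zero, map_zero]
  have hPsum : ∀ x : H, P x + P' x = x := by
    intro x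
    rw [← ContinuousLinearMap.add_apply, hPdef, hP'def, ← map_add, hpqsum, map_one,
      ContinuousLinearMap.one_apply]
  have hQsum : ∀ x : H, Q x + Q' x = x := by
    intro x
    rw [← ContinuousLinearMap.add_apply, hQdef, hQ'def, ← map_add, ← op_add, hpqsum, op_one,
      map_one, ContinuousLinearMap.one_apply]
  -- the corner sequences
  set ζ : ℕ → H := fun n => P' (Q' (ξ n)) with hζdef
  set η : ℕ → H := fun n => P (Q (ξ n)) with hηdef
  -- commuting through the corner projections
  have hswapL : ∀ (a : B × C) (x : H), a * q = a → q * a = a → L a (P' (Q' x)) = P' (Q' (L a x)) := by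
    intro a x h1 h2
    calc L a (P' (Q' x)) = (L a * P') (Q' x) := rfl
    _ = (P' * L a) (Q' x) := by rw [hP'def, ← map_mul, ← map_mul, h1, h2]
    _ = P' ((L a * Q') x) := rfl
    _ = P' ((Q' * L a) x) := by rw [(hcomm a (op q)).eq]
    _ = P' (Q' (L a x)) := rfl
  have hswapR : ∀ (a : B × C) (x : H), q * a = a → a * q = a →
      R (op a) (P' (Q' x)) = P' (Q' (R (op a) x)) := by
    intro a x h1 h2
    calc R (op a) (P' (Q' x)) = (R (op a) * P') (Q' x) := rfl
    _ = (P' * R (op a)) (Q' x) := by rw [← (hcomm q (op a)).eq]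
    _ = P' ((R (op a) * Q') x) := rfl
    _ = P' ((Q' * R (op a)) x) := by
        rw [hQ'def, ← map_mul, ← map_mul, ← op_mul, ← op_mul, h1, h2]
    _ = P' (Q' (R (op a) x)) := rfl
  have hζle : ∀ n, ‖ζ n‖ ≤ 1 := by
    intro n
    calc ‖ζ n‖ ≤ ‖Q' (ξ n)‖ := proj_contract P' hP's hP'i _
    _ ≤ ‖ξ n‖ := proj_contract Q' hQ's hQ'i _
    _ = 1 := hξ1 n
  -- Step 1 : the C-corner vanishes
  have hζ0 : Tendsto (fun n => ‖ζ n‖) atTop (nhds 0) := by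
    by_contra hcon
    apply hC
    refine trace_aux (fun c => L ((0 : B), c)) (fun c => R (op ((0 : B), c)))
      ?_ ?_ ?_ ?_ ?_ ?_ ζ hζle ?_ ?_ hcon
    · intro c d; rw [← map_mul]; congr 1; simp [Prod.ext_iff]
    · intro c d; rw [← map_add]; congr 1; simp [Prod.ext_iff]
    · intro z c; rw [← map_smul]; congr 1; simp [Prod.ext_iff]
    · intro c
      show L ((0:B), star c) = star (L ((0:B), c))
      rw [show (((0:B), star c) : B × C) = star ((0:B), c) by simp [Prod.ext_iff], map_star]
    · intro c
      show R (op ((0:B), star c)) = star (R (op ((0:B), c)))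
      rw [show (((0:B), star c) : B × C) = star ((0:B), c) by simp [Prod.ext_iff], op_star,
        map_star]
    · intro c d; exact hcomm _ _
    · intro n
      show L ((0 : B), (1 : C)) (ζ n) = ζ n
      have h01 : (((0 : B), (1 : C)) : B × C) = q := by rw [hq]
      rw [h01]
      show P' (P' (Q' (ξ n))) = P' (Q' (ξ n))
      calc P' (P' (Q' (ξ n))) = (P' * P') (Q' (ξ n)) := rfl
      _ = P' (Q' (ξ n)) := by rw [hP'i]
    · intro c
      have key : ∀ n, L ((0:B), c) (ζ n) - R (op ((0:B), c)) (ζ n)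
          = P' (Q' (L ((0:B), c) (ξ n) - R (op ((0:B), c)) (ξ n))) := by
        intro n
        rw [map_sub, map_sub, hζdef]
        have h1 : ((0:B), c) * q = ((0:B), c) := by simp [hq, Prod.ext_iff]
        have h2 : q * ((0:B), c) = ((0:B), c) := by simp [hq, Prod.ext_iff]
        rw [hswapL _ _ h1 h2, hswapR _ _ h2 h1]
      apply squeeze_zero (fun n => norm_nonneg _) (g := fun n =>
        ‖L ((0:B), c) (ξ n) - R (op ((0:B), c)) (ξ n)‖) ?_ (hξc ((0:B), c))
      intro n
      rw [key n]
      calc ‖P' (Q' (L ((0:B), c) (ξ n) - R (op ((0:B), c)) (ξ n)))‖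
          ≤ ‖Q' (L ((0:B), c) (ξ n) - R (op ((0:B), c)) (ξ n))‖ := proj_contract P' hP's hP'i _
      _ ≤ _ := proj_contract Q' hQ's hQ'i _
  -- Step 2 : the cross corners vanish
  have hcross1 : Tendsto (fun n => ‖P (Q' (ξ n))‖) atTop (nhds 0) := by
    have key : ∀ x : H, P (Q' x) = Q' (P x - Q x) := by
      intro x
      rw [map_sub]
      have h1 : Q' (Q x) = 0 := by rw [← mulap, hQ'Q]; rfl
      rw [h1, sub_zero, ← mulap, ← mulap, (hcomm p (op q)).eq]
    apply squeeze_zero (fun n => norm_nonneg _)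
      (g := fun n => ‖L p (ξ n) - R (op p) (ξ n)‖) ?_ (hξc p)
    intro n
    rw [key (ξ n)]
    exact proj_contract Q' hQ's hQ'i _
  have hcross2 : Tendsto (fun n => ‖P' (Q (ξ n))‖) atTop (nhds 0) := by
    have key : ∀ x : H, P' (Q x) = Q (Q x - P x) := by
      intro x
      rw [map_sub]
      have h1 : Q (Q x) = Q x := by rw [← mulap, hQi]
      rw [h1]
      have h2 : P' (Q x) = Q (P' x) := by rw [← mulap, ← mulap, (hcomm q (op p)).eq]
      have h3 : P' x = x - P x := by
        have := hPsum x; linear_combination (norm := abel) this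
      rw [h2, h3, map_sub]
    apply squeeze_zero (fun n => norm_nonneg _)
      (g := fun n => ‖Q (ξ n) - P (ξ n)‖) ?_ ?_
    · intro n
      rw [key (ξ n)]
      exact proj_contract Q hQs hQi _
    · have := (hξc p).neg
      have h2 : Tendsto (fun n => ‖Q (ξ n) - P (ξ n)‖) atTop (nhds 0) := by
        have h3 : (fun n => ‖Q (ξ n) - P (ξ n)‖) = fun n => ‖P (ξ n) - Q (ξ n)‖ := by
          funext n; rw [norm_sub_rev]
        rw [h3]; exact hξc p
      exact h2
  -- Step 3 : the B-corner has norm tending to 1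
  have hdecomp : ∀ n, ξ n = η n + P (Q' (ξ n)) + P' (Q (ξ n)) + P' (Q' (ξ n)) := by
    intro n
    rw [hηdef]
    have h1 : P (Q (ξ n)) + P (Q' (ξ n)) = P (ξ n) := by rw [← map_add, hQsum]
    have h2 : P' (Q (ξ n)) + P' (Q' (ξ n)) = P' (ξ n) := by rw [← map_add, hQsum]
    calc ξ n = P (ξ n) + P' (ξ n) := (hPsum (ξ n)).symm
    _ = (P (Q (ξ n)) + P (Q' (ξ n))) + (P' (Q (ξ n)) + P' (Q' (ξ n))) := by rw [h1, h2]
    _ = _ := by abel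
  have hηle : ∀ n, ‖η n‖ ≤ 1 := by
    intro n
    calc ‖η n‖ ≤ ‖Q (ξ n)‖ := proj_contract P hPs hPi _
    _ ≤ ‖ξ n‖ := proj_contract Q hQs hQi _
    _ = 1 := hξ1 n
  have hηlb : ∀ n, 1 - (‖P (Q' (ξ n))‖ + ‖P' (Q (ξ n))‖ + ‖P' (Q' (ξ n))‖) ≤ ‖η n‖ := by
    intro n
    have t1 : ‖η n + P (Q' (ξ n)) + P' (Q (ξ n)) + P' (Q' (ξ n))‖
        ≤ ‖η n + P (Q' (ξ n)) + P' (Q (ξ n))‖ + ‖P' (Q' (ξ n))‖ := norm_add_le _ _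
    have t2 : ‖η n + P (Q' (ξ n)) + P' (Q (ξ n))‖
        ≤ ‖η n + P (Q' (ξ n))‖ + ‖P' (Q (ξ n))‖ := norm_add_le _ _
    have t3 : ‖η n + P (Q' (ξ n))‖ ≤ ‖η n‖ + ‖P (Q' (ξ n))‖ := norm_add_le _ _
    have h0 : ‖ξ n‖ = ‖η n + P (Q' (ξ n)) + P' (Q (ξ n)) + P' (Q' (ξ n))‖ :=
      congrArg norm (hdecomp n)
    rw [hξ1 n] at h0
    linarith
  have hη1 : Tendsto (fun n => ‖η n‖) atTop (nhds 1) := by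
    have hlow : Tendsto (fun n => 1 - (‖P (Q' (ξ n))‖ + ‖P' (Q (ξ n))‖ + ‖P' (Q' (ξ n))‖))
        atTop (nhds 1) := by
      have := ((hcross1.add hcross2).add hζ0).const_sub 1
      simpa using this
    exact tendsto_of_tendsto_of_tendsto_of_le_of_le hlow tendsto_const_nhds hηlb hηle
  -- the B-bimodule K
  set Ksub : Submodule ℂ H := LinearMap.ker ((P - 1 : H →L[ℂ] H) : H →ₗ[ℂ] H) ⊓ LinearMap.ker ((Q - 1 : H →L[ℂ] H) : H →ₗ[ℂ] H) with hKdef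
  have hmemK : ∀ x : H, x ∈ Ksub ↔ P x = x ∧ Q x = x := by
    intro x
    rw [hKdef, Submodule.mem_inf, LinearMap.mem_ker, LinearMap.mem_ker]
    rw [ContinuousLinearMap.coe_coe, ContinuousLinearMap.coe_coe]
    rw [ContinuousLinearMap.coe_sub', Pi.sub_apply, ContinuousLinearMap.coe_sub', Pi.sub_apply]
    rw [ContinuousLinearMap.one_apply, sub_eq_zero, sub_eq_zero]
  have hKclosed : IsClosed (Ksub : Set H) := by
    rw [hKdef, Submodule.coe_inf]
    exact (ContinuousLinearMap.isClosed_ker _).inter (ContinuousLinearMap.isClosed_ker _)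
  haveI : CompleteSpace Ksub := hKclosed.completeSpace_coe
  have hLinv : ∀ b : B, ∀ x ∈ Ksub, L ((b, 0) : B × C) x ∈ Ksub := by
    intro b x hx
    obtain ⟨hx1, hx2⟩ := (hmemK x).mp hx
    rw [hmemK]
    constructor
    · rw [← mulap, hPdef, ← map_mul, show p * ((b,0) : B × C) = (b,0) by simp [hp, Prod.ext_iff]]
    · rw [← mulap, (hcomm (b,0) (op p)).symm.eq, mulap, hx2]
  have hRinv : ∀ b : B, ∀ x ∈ Ksub, R (op ((b, 0) : B × C)) x ∈ Ksub := by
    intro b x hx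
    obtain ⟨hx1, hx2⟩ := (hmemK x).mp hx
    rw [hmemK]
    constructor
    · rw [← mulap, (hcomm p (op (b,0))).eq, mulap, hx1]
    · rw [← mulap, hQdef, ← map_mul, ← op_mul,
        show ((b,0) : B × C) * p = (b,0) by simp [hp, Prod.ext_iff]]
  have hLstar : ∀ b : B, star (L ((b,0) : B × C)) = L ((star b, 0) : B × C) := by
    intro b
    rw [← map_star, show star ((b,0) : B × C) = (star b, 0) by simp [Prod.ext_iff]]
  have hRstar : ∀ b : B, star (R (op ((b,0) : B × C))) = R (op ((star b, 0) : B × C)) := by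
    intro b
    rw [← map_star, ← op_star, show star ((b,0) : B × C) = (star b, 0) by simp [Prod.ext_iff]]
  set LB : B →⋆ₐ[ℂ] (Ksub →L[ℂ] Ksub) :=
    buildLB Ksub (fun b => L ((b, 0) : B × C)) hLinv
      (fun x => ((hmemK _).mp x.2).1)
      (fun b b' => by
        show L ((b * b', 0) : B × C) = L ((b, 0) : B × C) * L ((b', 0) : B × C)
        rw [show ((b * b', 0) : B × C) = (b, 0) * (b', 0) by simp [Prod.ext_iff], map_mul])
      (fun b b' => by
        show L ((b + b', 0) : B × C) = L ((b, 0) : B × C) + L ((b', 0) : B × C)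
        rw [show ((b + b', 0) : B × C) = (b, 0) + (b', 0) by simp [Prod.ext_iff], map_add])
      (fun z b => by
        show L ((z • b, 0) : B × C) = z • L ((b, 0) : B × C)
        rw [show ((z • b, 0) : B × C) = z • ((b, 0) : B × C) by simp [Prod.ext_iff], map_smul])
      (fun b => by
        show L ((star b, 0) : B × C) = star (L ((b, 0) : B × C))
        rw [show ((star b, 0) : B × C) = star ((b, 0) : B × C) by simp [Prod.ext_iff], map_star])
    with hLBdef
  set RB : Bᵐᵒᵖ →⋆ₐ[ℂ] (Ksub →L[ℂ] Ksub) :=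
    buildLB Ksub (fun m => R (op ((unop m, 0) : B × C))) (fun m => hRinv (unop m))
      (fun x => ((hmemK _).mp x.2).2)
      (fun m m' => by
        show R (op ((unop (m * m'), 0) : B × C))
          = R (op ((unop m, 0) : B × C)) * R (op ((unop m', 0) : B × C))
        rw [show ((unop (m * m'), 0) : B × C) = (unop m', 0) * (unop m, 0) by
          simp [Prod.ext_iff], op_mul, map_mul])
      (fun m m' => by
        show R (op ((unop (m + m'), 0) : B × C))
          = R (op ((unop m, 0) : B × C)) + R (op ((unop m', 0) : B × C))
        rw [show ((unop (m + m'), 0) : B × C) = (unop m, 0) + (unop m', 0) by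
          simp [Prod.ext_iff], op_add, map_add])
      (fun z m => by
        show R (op ((unop (z • m), 0) : B × C)) = z • R (op ((unop m, 0) : B × C))
        rw [show ((unop (z • m), 0) : B × C) = z • ((unop m, 0) : B × C) by simp [Prod.ext_iff],
          op_smul, map_smul])
      (fun m => by
        show R (op ((unop (star m), 0) : B × C)) = star (R (op ((unop m, 0) : B × C)))
        rw [show ((unop (star m), 0) : B × C) = star ((unop m, 0) : B × C) by
          simp [Prod.ext_iff], op_star, map_star])
    with hRBdef
  have hcommK : ∀ (b : B) (m : Bᵐᵒᵖ), Commute (LB b) (RB m) := by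
    intro b m
    have := hcomm ((b, 0) : B × C) (op ((unop m, 0) : B × C))
    ext x
    show L ((b,0) : B × C) (R (op ((unop m, 0) : B × C)) (x : H))
      = R (op ((unop m, 0) : B × C)) (L ((b,0) : B × C) (x : H))
    rw [← mulap, ← mulap, this.eq]
  -- the almost-central unit vectors in K
  have hmemη : ∀ n, η n ∈ Ksub := by
    intro n
    rw [hmemK]
    constructor
    · show P (P (Q (ξ n))) = P (Q (ξ n))
      calc P (P (Q (ξ n))) = (P * P) (Q (ξ n)) := rfl
      _ = P (Q (ξ n)) := by rw [hPi]
    · show Q (P (Q (ξ n))) = P (Q (ξ n))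
      calc Q (P (Q (ξ n))) = (Q * P) (Q (ξ n)) := rfl
      _ = (P * Q) (Q (ξ n)) := by rw [← (hcomm p (op p)).eq]
      _ = P ((Q * Q) (ξ n)) := rfl
      _ = P (Q (ξ n)) := by rw [hQi]
  obtain ⟨N, hN⟩ : ∃ N : ℕ, ∀ n ≥ N, (1:ℝ)/2 ≤ ‖η n‖ := by
    have := hη1.eventually (eventually_ge_nhds (by norm_num : (1:ℝ)/2 < 1))
    rw [Filter.eventually_atTop] at this
    exact this
  set η' : ℕ → Ksub := fun k => ((‖η (k + N)‖ : ℂ))⁻¹ • (⟨η (k + N), hmemη (k + N)⟩ : Ksub)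
    with hη'def
  have hηpos : ∀ k : ℕ, (0:ℝ) < ‖η (k + N)‖ := fun k =>
    lt_of_lt_of_le (by norm_num) (hN (k + N) (Nat.le_add_left N k))
  have hη'1 : ∀ k, ‖η' k‖ = 1 := by
    intro k
    rw [hη'def]
    have : ‖(⟨η (k + N), hmemη (k + N)⟩ : Ksub)‖ = ‖η (k + N)‖ := rfl
    rw [norm_smul, this, norm_inv, Complex.norm_real, Real.norm_eq_abs,
      abs_of_pos (hηpos k), inv_mul_cancel₀ (ne_of_gt (hηpos k))]
  have hswapB : ∀ (b : B) (n : ℕ), L ((b,0) : B × C) (η n) - R (op ((b,0) : B × C)) (η n)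
      = P (Q (L ((b,0) : B × C) (ξ n) - R (op ((b,0) : B × C)) (ξ n))) := by
    intro b n
    rw [map_sub, map_sub, hηdef]
    have e1 : L ((b,0) : B × C) (P (Q (ξ n))) = P (Q (L ((b,0) : B × C) (ξ n))) := by
      calc L ((b,0) : B × C) (P (Q (ξ n))) = (L (b,0) * P) (Q (ξ n)) := rfl
      _ = (P * L (b,0)) (Q (ξ n)) := by
          rw [hPdef, ← map_mul, ← map_mul, show ((b,0) : B × C) * p = (b,0) by
            simp [hp, Prod.ext_iff], show p * ((b,0) : B × C) = (b,0) by simp [hp, Prod.ext_iff]]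
      _ = P ((L (b,0) * Q) (ξ n)) := rfl
      _ = P ((Q * L (b,0)) (ξ n)) := by rw [(hcomm ((b,0) : B × C) (op p)).eq]
      _ = _ := rfl
    have e2 : R (op ((b,0) : B × C)) (P (Q (ξ n))) = P (Q (R (op ((b,0) : B × C)) (ξ n))) := by
      calc R (op ((b,0) : B × C)) (P (Q (ξ n))) = (R (op (b,0)) * P) (Q (ξ n)) := rfl
      _ = (P * R (op (b,0))) (Q (ξ n)) := by rw [← (hcomm p (op ((b,0) : B × C))).eq]
      _ = P ((R (op (b,0)) * Q) (ξ n)) := rfl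
      _ = P ((Q * R (op (b,0))) (ξ n)) := by
          rw [hQdef, ← map_mul, ← map_mul, ← op_mul, ← op_mul,
            show ((b,0) : B × C) * p = (b,0) by simp [hp, Prod.ext_iff],
            show p * ((b,0) : B × C) = (b,0) by simp [hp, Prod.ext_iff]]
      _ = _ := rfl
    rw [e1, e2]
  have hcent : ∀ b : B, Tendsto (fun k => ‖LB b (η' k) - RB (op b) (η' k)‖) atTop (nhds 0) := by
    intro b
    have hco : ∀ k, ((LB b (η' k) - RB (op b) (η' k) : Ksub) : H)
        = ((‖η (k + N)‖ : ℂ))⁻¹ •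
          (L ((b,0) : B × C) (η (k + N)) - R (op ((b,0) : B × C)) (η (k + N))) := by
      intro k
      have : ((LB b (η' k) - RB (op b) (η' k) : Ksub) : H)
          = L ((b,0) : B × C) ((η' k : H)) - R (op ((b,0) : B × C)) ((η' k : H)) := by
        rfl
      rw [this, hη'def]
      show L ((b,0) : B × C) (((‖η (k + N)‖ : ℂ))⁻¹ • η (k + N))
          - R (op ((b,0) : B × C)) (((‖η (k + N)‖ : ℂ))⁻¹ • η (k + N)) = _
      rw [map_smul, map_smul, smul_sub]
    apply squeeze_zero (fun k => norm_nonneg _)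
      (g := fun k => 2 * ‖L ((b,0) : B × C) (ξ (k + N)) - R (op ((b,0) : B × C)) (ξ (k + N))‖) ?_ ?_
    · intro k
      have hnk : ‖LB b (η' k) - RB (op b) (η' k)‖
          = ‖((LB b (η' k) - RB (op b) (η' k) : Ksub) : H)‖ := rfl
      rw [hnk, hco k, norm_smul, norm_inv, Complex.norm_real, Real.norm_eq_abs,
        abs_of_pos (hηpos k), hswapB b (k + N)]
      have h1 : ‖P (Q (L ((b,0) : B × C) (ξ (k + N)) - R (op ((b,0) : B × C)) (ξ (k + N))))‖
          ≤ ‖L ((b,0) : B × C) (ξ (k + N)) - R (op ((b,0) : B × C)) (ξ (k + N))‖ := by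
        calc _ ≤ ‖Q (L ((b,0) : B × C) (ξ (k + N)) - R (op ((b,0) : B × C)) (ξ (k + N)))‖ :=
            proj_contract P hPs hPi _
        _ ≤ _ := proj_contract Q hQs hQi _
      have h2 : ‖η (k + N)‖⁻¹ ≤ 2 := by
        rw [show (2:ℝ) = ((1:ℝ)/2)⁻¹ by norm_num]
        exact inv_anti₀ (by norm_num) (hN (k + N) (Nat.le_add_left N k))
      exact mul_le_mul h2 h1 (norm_nonneg _) (by norm_num)
    · have := ((hξc ((b,0) : B × C)).comp (tendsto_add_atTop_nat N)).const_mul 2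
      simpa using this
  obtain ⟨χ, hχne, hχ⟩ := hB Ksub LB RB hcommK ⟨η', hη'1, hcent⟩
  refine ⟨(χ : H), ?_, ?_⟩
  · intro h
    exact hχne (Subtype.ext h)
  · rintro ⟨b, c⟩
    have hPχ : P (χ : H) = (χ : H) := ((hmemK _).mp χ.2).1
    have hQχ : Q (χ : H) = (χ : H) := ((hmemK _).mp χ.2).2
    have hb : L ((b, 0) : B × C) (χ : H) = R (op ((b, 0) : B × C)) (χ : H) := by
      have := hχ b
      have h2 := congrArg (Subtype.val) this
      exact h2
    have hLc : L ((0, c) : B × C) (χ : H) = 0 := by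
      rw [← hPχ, ← mulap, hPdef, ← map_mul,
        show ((0,c) : B × C) * p = 0 by simp [hp, Prod.ext_iff], map_zero]
      rfl
    have hRc : R (op ((0, c) : B × C)) (χ : H) = 0 := by
      rw [← hQχ, ← mulap, hQdef, ← map_mul, ← op_mul,
        show p * ((0,c) : B × C) = 0 by simp [hp, Prod.ext_iff], op_zero, map_zero]
      rfl
    have hsplit : ((b, c) : B × C) = (b, 0) + (0, c) := by simp [Prod.ext_iff]
    rw [hsplit, map_add, op_add, map_add, ContinuousLinearMap.add_apply,
      ContinuousLinearMap.add_apply, hLc, hRc, hb]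
end
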